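/- Suppose a² < 4q, a ≠ 2, and θ/π is irrational, where θ = arccos(a/(2√q)) ∈ [0, π]. Then there exist infinitely many positive integers X with |M(X)| > q^{X/2} (so the Mertens conjecture for an elliptic curve over F_q with Frobenius trace a is false). -/

import Mathlib

open Real Filter

lemma step_hits (ε g b t : ℝ) (hε : 0 < ε) (hg0 : 0 < g) (hgε : g < ε) :
    ∃ (k : ℕ) (c : ℤ), |b + k * g - (t + 2 * π * c)| < ε := by
  have h2π : (0:ℝ) < 2 * π := by positivity
  set c : ℤ := ⌈(b - t) / (2 * π)⌉ with hc
  have hT : b ≤ t + 2 * π * c := by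
    have h1 : (b - t) / (2 * π) ≤ (c : ℝ) := Int.le_ceil _
    have := (div_le_iff₀ h2π).mp h1
    linarith
  set T : ℝ := t + 2 * π * c with hTdef
  set k0 : ℤ := ⌈(T - b) / g⌉ with hk0
  have hk0nn : 0 ≤ k0 := Int.ceil_nonneg (div_nonneg (by linarith) hg0.le)
  have h1 : T - b ≤ k0 * g := by
    have := (div_le_iff₀ hg0).mp (Int.le_ceil ((T - b) / g))
    linarith
  have hdivg : (T - b) / g * g = T - b := div_mul_cancel₀ _ hg0.ne'
  have h2 : (k0 : ℝ) * g < T - b + g := by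
    have := mul_lt_mul_of_pos_right (Int.ceil_lt_add_one ((T - b) / g)) hg0
    rw [add_mul, hdivg, one_mul] at this
    exact this
  refine ⟨k0.toNat, c, ?_⟩
  have hcast : ((k0.toNat : ℕ) : ℝ) = (k0 : ℝ) := by
    exact_mod_cast Int.toNat_of_nonneg hk0nn
  rw [hcast, abs_lt]
  constructor <;> nlinarith

lemma nat_rotation_dense (θ t ε : ℝ) (hirr : Irrational (θ / π)) (hε : 0 < ε) (X₀ : ℕ) :
    ∃ X : ℕ, X₀ ≤ X ∧ ∃ c : ℤ, |(X : ℝ) * θ - t - 2 * π * c| < ε := by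
  have hπ : (0:ℝ) < π := Real.pi_pos
  have h2π : (0:ℝ) < 2 * π := by positivity
  set S : AddSubgroup ℝ := AddSubgroup.closure {θ, 2 * π} with hS
  have hdense : Dense (S : Set ℝ) := by
    rcases AddSubgroup.dense_or_cyclic S with hd | ⟨g, hgS⟩
    · exact hd
    · exfalso
      have hθS : θ ∈ S := AddSubgroup.subset_closure (by simp)
      have h2πS : 2 * π ∈ S := AddSubgroup.subset_closure (by simp)
      rw [hgS, AddSubgroup.mem_closure_singleton] at hθS h2πS
      obtain ⟨m, hm⟩ := hθS
      obtain ⟨n, hn⟩ := h2πS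
      have hm' : (m : ℝ) * g = θ := by rw [← hm]; simp [zsmul_eq_mul]
      have hn' : (n : ℝ) * g = 2 * π := by rw [← hn]; simp [zsmul_eq_mul]
      have hnZ : n ≠ 0 := by
        rintro rfl
        simp at hn'
      have hn0 : (n : ℝ) ≠ 0 := Int.cast_ne_zero.mpr hnZ
      apply hirr
      refine ⟨(2 * m) / n, ?_⟩
      push_cast
      rw [div_eq_div_iff hn0 (ne_of_gt hπ)]
      linear_combination (n : ℝ) * hm' - (m : ℝ) * hn'
  -- find a small positive element of S
  obtain ⟨x, hxS, hx⟩ := hdense.exists_mem_open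
    (isOpen_Ioo : IsOpen (Set.Ioo (0:ℝ) (min ε (2*π))))
    (Set.nonempty_Ioo.mpr (by positivity))
  obtain ⟨hx0, hxlt⟩ := hx
  have hxε : x < ε := lt_of_lt_of_le hxlt (min_le_left _ _)
  have hx2π : x < 2 * π := lt_of_lt_of_le hxlt (min_le_right _ _)
  rw [SetLike.mem_coe, AddSubgroup.mem_closure_pair] at hxS
  obtain ⟨m, n, hmn⟩ := hxS
  have hmn' : (m : ℝ) * θ + (n : ℝ) * (2 * π) = x := by
    rw [← hmn]; push_cast [zsmul_eq_mul]; ring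
  have hm0 : m ≠ 0 := by
    rintro rfl
    simp at hmn'
    have h1 : (0:ℝ) < (n : ℝ) := by nlinarith
    have h2 : (n : ℝ) < 1 := by nlinarith
    have h1' : (0:ℤ) < n := by exact_mod_cast h1
    have h2' : n < 1 := by exact_mod_cast h2
    omega
  rcases lt_or_gt_of_ne hm0 with hmneg | hmpos
  · -- m < 0
    obtain ⟨k, c, hkc⟩ := step_hits ε x (-((X₀ : ℝ) * θ)) (-t) hε hx0 hxε
    refine ⟨X₀ + k * (-m).toNat, Nat.le_add_right _ _, (k : ℤ) * n - c, ?_⟩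
    have hmcast : (((-m).toNat : ℕ) : ℝ) = -(m : ℝ) := by
      have : ((-m).toNat : ℤ) = -m := Int.toNat_of_nonneg (by omega)
      exact_mod_cast this
    have hXθ : ((X₀ + k * (-m).toNat : ℕ) : ℝ) * θ =
        (X₀ : ℝ) * θ - (k : ℝ) * ((m : ℝ) * θ) := by
      push_cast [hmcast]
      ring
    rw [hXθ]
    have hmθ : (m : ℝ) * θ = x - (n : ℝ) * (2 * π) := by linarith
    rw [hmθ]
    rw [show (X₀ : ℝ) * θ - (k:ℝ) * (x - (n:ℝ) * (2 * π)) - t - 2 * π * (((k : ℤ) * n - c : ℤ) : ℝ)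
        = -(-((X₀ : ℝ) * θ) + (k:ℝ) * x - (-t + 2 * π * (c:ℝ))) by push_cast; ring]
    rw [abs_neg]
    exact hkc
  · -- m > 0
    obtain ⟨k, c, hkc⟩ := step_hits ε x ((X₀ : ℝ) * θ) t hε hx0 hxε
    refine ⟨X₀ + k * m.toNat, Nat.le_add_right _ _, c - (k : ℤ) * n, ?_⟩
    have hmcast : ((m.toNat : ℕ) : ℝ) = (m : ℝ) := by
      have : (m.toNat : ℤ) = m := Int.toNat_of_nonneg (by omega)
      exact_mod_cast this
    have hXθ : ((X₀ + k * m.toNat : ℕ) : ℝ) * θ =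
        (X₀ : ℝ) * θ + (k : ℝ) * ((m : ℝ) * θ) := by
      push_cast [hmcast]
      ring
    rw [hXθ]
    have hmθ : (m : ℝ) * θ = x - (n : ℝ) * (2 * π) := by linarith
    rw [hmθ]
    rw [show (X₀ : ℝ) * θ + (k:ℝ) * (x - (n:ℝ) * (2 * π)) - t - 2 * π * ((c - (k : ℤ) * n : ℤ) : ℝ)
        = (X₀ : ℝ) * θ + (k:ℝ) * x - (t + 2 * π * (c:ℝ)) by push_cast; ring]
    exact hkc



/-- The coefficient sequence `c_N` with `c_0 = 1`, `c_1 = a - q - 1`,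
`c_2 = a*c_1 - q*c_0 + q`, and `c_N = a*c_{N-1} - q*c_{N-2}` for `N ≥ 3`;
these are the Taylor coefficients at `u = 0` of `(1-u)(1-qu)/(1-au+qu²)`,
the reciprocal of the zeta function of an elliptic curve over `F_q` with
Frobenius trace `a`. -/
def mertC (q a : ℤ) : ℕ → ℤ
  | 0 => 1
  | 1 => a - q - 1
  | 2 => a * (a - q - 1) - q * 1 + q
  | (N + 3) => a * mertC q a (N + 2) - q * mertC q a (N + 1)

/-- `M(X) = ∑_{N=0}^{X-1} c_N`, the Mertens summatory function of the
Möbius function of an elliptic curve over `F_q` with Frobenius trace `a`. -/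
def mertM (q a : ℤ) (X : ℕ) : ℤ := ∑ N ∈ Finset.range X, mertC q a N

lemma mertM_succ (q a : ℤ) (X : ℕ) : mertM q a (X + 1) = mertM q a X + mertC q a X :=
  Finset.sum_range_succ _ _

lemma mertM_rec (q a : ℤ) : ∀ X : ℕ,
    mertM q a (X + 3) = a * mertM q a (X + 2) - q * mertM q a (X + 1) := by
  intro X
  induction X with
  | zero =>
    simp [mertM, Finset.sum_range_succ, mertC]
    ring
  | succ n ih =>
    have h4 := mertM_succ q a (n + 3)
    have h3 := mertM_succ q a (n + 2)
    have h2 := mertM_succ q a (n + 1)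
    have hc : mertC q a (n + 3) = a * mertC q a (n + 2) - q * mertC q a (n + 1) := rfl
    show mertM q a (n + 3 + 1) = a * mertM q a (n + 2 + 1) - q * mertM q a (n + 1 + 1)
    linear_combination h4 + hc + ih - a * h3 + q * h2


theorem mertens_conjecture_false_of_trace_ne_two (q a : ℤ) (hq : 2 ≤ q)
    (ha : a ^ 2 < 4 * q) (ha2 : a ≠ 2)
    (hθ : Irrational (Real.arccos ((a : ℝ) / (2 * Real.sqrt (q : ℝ))) / Real.pi)) :
    ∀ X₀ : ℕ, ∃ X : ℕ, X₀ ≤ X ∧ 1 ≤ X ∧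
      |(mertM q a X : ℝ)| > (q : ℝ) ^ ((X : ℝ) / 2) := by
  intro X₀
  have hqR : (2:ℝ) ≤ (q:ℝ) := by exact_mod_cast hq
  have hq0 : (0:ℝ) < (q:ℝ) := by linarith
  set sq : ℝ := Real.sqrt (q:ℝ) with hsqdef
  have hsq0 : 0 < sq := Real.sqrt_pos.mpr hq0
  have hsq2 : sq ^ 2 = (q:ℝ) := Real.sq_sqrt hq0.le
  set cθ : ℝ := (a:ℝ) / (2 * sq) with hcθ
  have haR : (a:ℝ)^2 < 4 * (q:ℝ) := by exact_mod_cast ha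
  have hc2 : cθ ^ 2 < 1 := by
    rw [hcθ, div_pow, div_lt_one (by positivity)]
    nlinarith
  have hc1 : -1 ≤ cθ := by nlinarith
  have hc1' : cθ ≤ 1 := by nlinarith
  set θ : ℝ := Real.arccos cθ with hθdef
  have hcos : Real.cos θ = cθ := Real.cos_arccos hc1 hc1'
  have hsin : Real.sin θ = Real.sqrt (1 - cθ^2) := by rw [hθdef, Real.sin_arccos]
  have hs0 : 0 < Real.sin θ := by rw [hsin]; exact Real.sqrt_pos.mpr (by nlinarith)
  set s : ℝ := Real.sin θ with hsdef
  set Q : ℝ := (1/sq - cθ) / s with hQdef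
  have hQs : Q * s = 1/sq - cθ := div_mul_cancel₀ _ hs0.ne'
  have ha' : 2 * sq * cθ = (a:ℝ) := by rw [hcθ]; field_simp
  set h : ℝ → ℝ := fun x => Real.cos (x * θ) + Q * Real.sin (x * θ) with hh
  have trigc : ∀ x : ℝ, Real.cos (x + θ + θ) + Real.cos x = 2 * Real.cos θ * Real.cos (x + θ) := by
    intro x
    have e1 := Real.cos_add (x + θ) θ
    have e2 : Real.cos x = Real.cos (x+θ) * Real.cos θ + Real.sin (x+θ) * Real.sin θ := by
      rw [← Real.cos_sub]; congr 1; ring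
    rw [show x + θ + θ = (x + θ) + θ by ring, e1]
    linarith
  have trigs : ∀ x : ℝ, Real.sin (x + θ + θ) + Real.sin x = 2 * Real.cos θ * Real.sin (x + θ) := by
    intro x
    have e1 := Real.sin_add (x + θ) θ
    have e2 : Real.sin x = Real.sin (x+θ) * Real.cos θ - Real.cos (x+θ) * Real.sin θ := by
      rw [← Real.sin_sub]; congr 1; ring
    rw [show x + θ + θ = (x + θ) + θ by ring, e1]
    linarith
  have hrec : ∀ x : ℝ, h (x + 2) + h x = 2 * cθ * h (x + 1) := by
    intro x
    simp only [hh]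
    rw [show (x+2)*θ = x*θ + θ + θ by ring, show (x+1)*θ = x*θ + θ by ring]
    linear_combination trigc (x*θ) + Q * trigs (x*θ)
      + 2 * (Real.cos (x*θ+θ) + Q * Real.sin (x*θ+θ)) * hcos
  -- base cases
  have hM1 : ((mertM q a 1 : ℤ) : ℝ) = sq ^ 1 * h ((1:ℕ):ℝ) := by
    have e : mertM q a 1 = 1 := by simp [mertM, mertC]
    rw [e]
    simp only [hh, Nat.cast_one, one_mul, pow_one]
    rw [hcos, ← hsdef]
    rw [show cθ + Q * s = cθ + (Q * s) by ring, hQs]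
    push_cast
    field_simp
    ring
  have hM2 : ((mertM q a 2 : ℤ) : ℝ) = sq ^ 2 * h ((2:ℕ):ℝ) := by
    have e : mertM q a 2 = a - q := by
      show (∑ N ∈ Finset.range 2, mertC q a N) = a - q
      rw [Finset.sum_range_succ, Finset.sum_range_one]
      show (1 : ℤ) + (a - q - 1) = a - q
      ring
    rw [e]
    simp only [hh, Nat.cast_ofNat]
    rw [Real.cos_two_mul, Real.sin_two_mul, hcos, ← hsdef]
    have hQs' : sq * (Q * s) = 1 - sq * cθ := by
      rw [hQs]; field_simp
    push_cast
    linear_combination hsq2 - ha' - 2*sq*cθ*hQs'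
  -- closed form by two-step induction
  have key : ∀ n : ℕ, ((mertM q a (n+1) : ℤ) : ℝ) = sq ^ (n+1) * h ((n+1 : ℕ):ℝ) ∧
      ((mertM q a (n+2) : ℤ) : ℝ) = sq ^ (n+2) * h ((n+2 : ℕ):ℝ) := by
    intro n
    induction n with
    | zero => exact ⟨hM1, hM2⟩
    | succ n ih =>
      obtain ⟨ih1, ih2⟩ := ih
      refine ⟨ih2, ?_⟩
      have hcast : ((mertM q a (n+3) : ℤ) : ℝ) =
          (a:ℝ) * ((mertM q a (n+2):ℤ):ℝ) - (q:ℝ) * ((mertM q a (n+1):ℤ):ℝ) := by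
        exact_mod_cast mertM_rec q a n
      show ((mertM q a (n+3) : ℤ) : ℝ) = sq ^ (n+3) * h ((n+3 : ℕ):ℝ)
      rw [hcast, ih1, ih2]
      have hrecn := hrec ((n:ℝ)+1)
      rw [show (n:ℝ)+1+2 = (n:ℝ)+3 by ring, show (n:ℝ)+1+1 = (n:ℝ)+2 by ring] at hrecn
      have e3 : ((n+3 : ℕ):ℝ) = (n:ℝ)+3 := by push_cast; ring
      have e2 : ((n+2 : ℕ):ℝ) = (n:ℝ)+2 := by push_cast; ring
      have e1 : ((n+1 : ℕ):ℝ) = (n:ℝ)+1 := by push_cast; ring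
      rw [e1, e2, e3]
      rw [show n+3 = (n+1)+1+1 by ring, show n+2 = (n+1)+1 by ring,
        pow_succ, pow_succ]
      linear_combination (-(sq^(n+1) * sq * h ((n:ℝ)+2))) * ha'
        + (sq^(n+1) * h ((n:ℝ)+1)) * hsq2 + (-(sq^(n+1) * sq^2)) * hrecn
  -- amplitude R > 1
  have hQ0 : Q ≠ 0 := by
    rw [hQdef]
    apply div_ne_zero _ hs0.ne'
    rw [hcθ]
    intro hcon
    apply ha2
    have h2a : (a:ℝ) = 2 := by
      field_simp at hcon
      linarith
    exact_mod_cast h2a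
  set R : ℝ := Real.sqrt (1 + Q^2) with hRdef
  have hR2 : R^2 = 1 + Q^2 := Real.sq_sqrt (by positivity)
  have hQ2 : 0 < Q^2 := (sq_nonneg Q).lt_of_ne (Ne.symm (pow_ne_zero 2 hQ0))
  have hRnn : 0 ≤ R := Real.sqrt_nonneg _
  have hR1 : 1 < R := by nlinarith
  have hR0 : 0 < R := lt_trans one_pos hR1
  have hinv1 : 1/R < 1 := by rw [div_lt_one hR0]; exact hR1
  have hinv0 : 0 < 1/R := by positivity
  set ψ : ℝ := if 0 ≤ Q then Real.arccos (1/R) else -Real.arccos (1/R) with hψdef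
  have hcosψ : Real.cos ψ = 1/R := by
    rw [hψdef]
    split_ifs
    · exact Real.cos_arccos (by linarith) hinv1.le
    · rw [Real.cos_neg]; exact Real.cos_arccos (by linarith) hinv1.le
  have hsinA : Real.sin (Real.arccos (1/R)) = |Q|/R := by
    rw [Real.sin_arccos]
    rw [show 1 - (1/R)^2 = (|Q|/R)^2 by
      rw [div_pow, div_pow, sq_abs]; field_simp; linarith [hR2]]
    exact Real.sqrt_sq (by positivity)
  have hsinψ : Real.sin ψ = Q/R := by
    rw [hψdef]; split_ifs with hq'
    · rw [hsinA, abs_of_nonneg hq']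
    · rw [Real.sin_neg, hsinA, abs_of_neg (not_le.mp hq')]; ring
  have hamp : ∀ x : ℝ, Real.cos x + Q * Real.sin x = R * Real.cos (x - ψ) := by
    intro x
    rw [Real.cos_sub, hcosψ, hsinψ]
    field_simp
  set ε0 : ℝ := Real.arccos ((1 + 1/R)/2) with hε0def
  have hb1 : (1 + 1/R)/2 < 1 := by linarith
  have hb0 : -1 ≤ (1 + 1/R)/2 := by linarith
  have hε0pos : 0 < ε0 := Real.arccos_pos.mpr hb1
  have hε0pi : ε0 ≤ π := Real.arccos_le_pi _
  have hcosε0 : Real.cos ε0 = (1 + 1/R)/2 := Real.cos_arccos hb0 hb1.le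
  have hcosε0gt : 1/R < Real.cos ε0 := by rw [hcosε0]; linarith
  obtain ⟨X, hXge, c, hXc⟩ := nat_rotation_dense θ ψ ε0 hθ hε0pos (max X₀ 1)
  have hX1 : 1 ≤ X := le_trans (le_max_right _ _) hXge
  have hX0 : X₀ ≤ X := le_trans (le_max_left _ _) hXge
  refine ⟨X, hX0, hX1, ?_⟩
  set y : ℝ := (X:ℝ) * θ - ψ - 2 * π * c with hydef
  have hcosy : Real.cos ((X:ℝ) * θ - ψ) = Real.cos y := by
    rw [show (X:ℝ) * θ - ψ = y + c * (2 * π) by rw [hydef]; ring]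
    exact Real.cos_add_int_mul_two_pi y c
  have hcoslt : Real.cos ε0 < Real.cos |y| :=
    Real.cos_lt_cos_of_nonneg_of_le_pi (abs_nonneg y) hε0pi hXc
  rw [Real.cos_abs] at hcoslt
  have hval : 1 < h ((X:ℕ):ℝ) := by
    have hax := hamp ((X:ℝ) * θ)
    simp only [hh]
    rw [hax, hcosy]
    calc (1:ℝ) = R * (1/R) := by field_simp
    _ < R * Real.cos y := by
        apply mul_lt_mul_of_pos_left _ hR0
        linarith
  obtain ⟨n, rfl⟩ : ∃ n, X = n + 1 := ⟨X - 1, by omega⟩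
  have hMX := (key n).1
  have hspos : 0 < sq ^ (n+1) := pow_pos hsq0 _
  have hlt : sq ^ (n+1) < ((mertM q a (n+1) : ℤ):ℝ) := by
    rw [hMX]
    have h2' := mul_lt_mul_of_pos_left hval hspos
    rw [mul_one] at h2'
    exact h2'
  have hpow : (q:ℝ) ^ (((n+1:ℕ):ℝ)/2) = sq ^ (n+1) := by
    rw [hsqdef]
    rw [show (((n+1:ℕ):ℝ)/2) = (1/2 : ℝ) * ((n+1:ℕ):ℝ) by ring,
      Real.rpow_mul hq0.le, Real.rpow_natCast, ← Real.sqrt_eq_rpow]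
  rw [gt_iff_lt, hpow]
  calc sq ^ (n+1) < ((mertM q a (n+1) : ℤ):ℝ) := hlt
  _ ≤ |((mertM q a (n+1) : ℤ):ℝ)| := le_abs_self _
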